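/- arXiv:2112.03988 — 2 statements merged into one kernel-verified Lean document; each statement's English description precedes it below -/
import Mathlib

section
/- Let (A, θ) be a Z₂-graded unital C*-algebra. The restriction map ω ↦ ω|_{A₊} is an affine bijection from the set of even states of A onto the set of states of A₊. Consequently, an even state ω is an extreme point of the convex set of even states if and only if ω|_{A₊} is a pure state of A₊. -/
open scoped ComplexOrder

/-- A state on a unital C*-algebra: a unital positive continuous linear functional. -/
def IsState {A : Type*} [NormedRing A] [StarRing A] [NormedAlgebra ℂ A]
    (φ : A →L[ℂ] ℂ) : Prop :=
  φ 1 = 1 ∧ ∀ a : A, 0 ≤ φ (star a * a)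

/-- The set of even states of a Z₂-graded C*-algebra. -/
def evenStates {A : Type*} [NormedRing A] [StarRing A] [NormedAlgebra ℂ A]
    (θ : A ≃⋆ₐ[ℂ] A) : Set (A →L[ℂ] ℂ) :=
  {φ | IsState φ ∧ ∀ a : A, φ (θ a) = φ a}

/-- The even part of a Z₂-graded C*-algebra, as a *-subalgebra. -/
def evenSA {A : Type*} [NormedRing A] [StarRing A] [NormedAlgebra ℂ A] [StarModule ℂ A]
    (θ : A ≃⋆ₐ[ℂ] A) : StarSubalgebra ℂ A where
  carrier := {a : A | θ a = a}
  mul_mem' := fun ha hb => by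
    simp only [Set.mem_setOf_eq] at *; rw [map_mul, ha, hb]
  add_mem' := fun ha hb => by
    simp only [Set.mem_setOf_eq] at *; rw [map_add, ha, hb]
  algebraMap_mem' := fun c => by
    simp only [Set.mem_setOf_eq, AlgHomClass.commutes]
  star_mem' := fun ha => by
    simp only [Set.mem_setOf_eq] at *; rw [map_star, ha]

/-- The continuous linear inclusion of the even part into the algebra. -/
def inclL {A : Type*} [NormedRing A] [StarRing A] [NormedAlgebra ℂ A] [StarModule ℂ A]
    (θ : A ≃⋆ₐ[ℂ] A) : ↥(evenSA θ) →L[ℂ] A :=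
  ⟨{ toFun := fun x => (x : A)
     map_add' := fun _ _ => rfl
     map_smul' := fun _ _ => rfl }, continuous_subtype_val⟩


section Aux
variable {A : Type*} [NormedRing A] [StarRing A] [CStarRing A]
    [NormedAlgebra ℂ A] [CompleteSpace A] [StarModule ℂ A]

/-- A square root of an even positive element can be chosen even. -/
lemma exists_even_sqrt (θ : A ≃⋆ₐ[ℂ] A) (x : A) (hx : θ x = x) (hv : ∃ v, x = star v * v) :
    ∃ y : A, θ y = y ∧ star y * y = x := by
  letI : CStarAlgebra A := ⟨⟩
  letI := CStarAlgebra.spectralOrder A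
  haveI := CStarAlgebra.spectralOrderedRing A
  obtain ⟨v, rfl⟩ := hv
  have hx0 : (0:A) ≤ star v * v := star_mul_self_nonneg v
  have hsa : IsSelfAdjoint (star v * v) := .star_mul_self v
  refine ⟨cfc Real.sqrt (star v * v), ?_, ?_⟩
  · have hc : Continuous θ := (NonUnitalStarAlgHom.isometry θ θ.injective).continuous
    have := StarAlgHomClass.map_cfc (S := ℂ) θ Real.sqrt (star v * v)
      (by fun_prop) hc hsa (by rw [hx]; exact hsa)
    rw [this, hx]
  · have h1 : IsSelfAdjoint (cfc Real.sqrt (star v * v)) := cfc_predicate _ _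
    rw [h1.star_eq, ← cfc_mul _ _ _ (by fun_prop) (by fun_prop)]
    have h2 : ∀ t ∈ spectrum ℝ (star v * v), Real.sqrt t * Real.sqrt t = t := fun t ht =>
      Real.mul_self_sqrt (spectrum_nonneg_of_nonneg hx0 ht)
    rw [cfc_congr h2, cfc_id' ℝ (star v * v)]

lemma theta_continuous (θ : A ≃⋆ₐ[ℂ] A) : Continuous θ := by
  letI : CStarAlgebra A := ⟨⟩
  exact (NonUnitalStarAlgHom.isometry θ θ.injective).continuous

/-- The projection onto the even part, as a linear map. -/
noncomputable def evenProjₗ (θ : A ≃⋆ₐ[ℂ] A) (hθ : ∀ a, θ (θ a) = a) :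
    A →ₗ[ℂ] ↥(evenSA θ) where
  toFun a := ⟨(2⁻¹:ℂ) • (a + θ a), by
    show θ ((2⁻¹:ℂ) • (a + θ a)) = (2⁻¹:ℂ) • (a + θ a)
    rw [map_smul, map_add, hθ, add_comm]⟩
  map_add' a b := Subtype.ext <| by
    show (2⁻¹:ℂ) • (a + b + θ (a + b)) = (2⁻¹:ℂ) • (a + θ a) + (2⁻¹:ℂ) • (b + θ b)
    rw [map_add, ← smul_add]
    congr 1
    abel
  map_smul' c a := Subtype.ext <| by
    show (2⁻¹:ℂ) • (c • a + θ (c • a)) = c • ((2⁻¹:ℂ) • (a + θ a))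
    rw [map_smul, ← smul_add, smul_comm]

/-- The projection onto the even part, as a continuous linear map. -/
noncomputable def evenProj (θ : A ≃⋆ₐ[ℂ] A) (hθ : ∀ a, θ (θ a) = a) : A →L[ℂ] ↥(evenSA θ) :=
  ⟨evenProjₗ θ hθ, ((continuous_id.add (theta_continuous θ)).const_smul _).subtype_mk _⟩

lemma evenProj_coe (θ : A ≃⋆ₐ[ℂ] A) (hθ : ∀ a, θ (θ a) = a) (a : A) :
    ((evenProj θ hθ a : ↥(evenSA θ)) : A) = (2⁻¹:ℂ) • (a + θ a) := rfl

omit [StarRing A] [CStarRing A] [CompleteSpace A] [StarModule ℂ A] in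
lemma half_smul_add_self (a : A) : (2⁻¹:ℂ) • (a + a) = a := by
  rw [← two_smul ℂ a, smul_smul]
  norm_num

end Aux

/- STATEMENT 6: the restriction map is an affine bijection from the even states of A
onto the states of A₊; an even state is extreme among even states iff its restriction
to A₊ is a pure state. -/
theorem stmt6 {A : Type*} [NormedRing A] [StarRing A] [CStarRing A]
    [NormedAlgebra ℂ A] [CompleteSpace A] [StarModule ℂ A]
    (θ : A ≃⋆ₐ[ℂ] A) (hθ : ∀ a, θ (θ a) = a) :
    let R : (A →L[ℂ] ℂ) → (↥(evenSA θ) →L[ℂ] ℂ) := fun φ => φ.comp (inclL θ)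
    -- bijection from even states onto states of A₊
    Set.BijOn R (evenStates θ) {ψ : ↥(evenSA θ) →L[ℂ] ℂ | IsState ψ} ∧
    -- affine
    (∀ φ ψ : A →L[ℂ] ℂ, ∀ t : ℝ, 0 ≤ t → t ≤ 1 →
      R ((t : ℂ) • φ + ((1 - t : ℝ) : ℂ) • ψ) =
        (t : ℂ) • R φ + ((1 - t : ℝ) : ℂ) • R ψ) ∧
    -- extreme even states correspond exactly to pure states of A₊
    (∀ ω ∈ evenStates θ,
      ω ∈ Set.extremePoints ℝ (evenStates θ) ↔
        R ω ∈ Set.extremePoints ℝ {ψ : ↥(evenSA θ) →L[ℂ] ℂ | IsState ψ}) := by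
  intro R
  letI : CStarAlgebra A := ⟨⟩
  have hRapp : ∀ (φ : A →L[ℂ] ℂ) (b : ↥(evenSA θ)), R φ b = φ (b : A) := fun _ _ => rfl
  set Q := evenProj θ hθ with hQdef
  have hQcoe : ∀ a : A, ((Q a : ↥(evenSA θ)) : A) = (2⁻¹:ℂ) • (a + θ a) := fun a => rfl
  -- an even state agrees with its value on the even projection
  have heval : ∀ φ ∈ evenStates θ, ∀ a : A, φ ((Q a : ↥(evenSA θ)) : A) = φ a := by
    rintro φ ⟨hst, he⟩ a
    rw [hQcoe, map_smul, map_add, he]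
    have : φ a + φ a = (2:ℂ) * φ a := by ring
    rw [this, smul_eq_mul]
    ring
  -- R maps even states to states of the even part
  have hmaps : Set.MapsTo R (evenStates θ) {ψ : ↥(evenSA θ) →L[ℂ] ℂ | IsState ψ} := by
    rintro φ ⟨⟨h1, h2⟩, he⟩
    refine ⟨?_, fun b => ?_⟩
    · show φ ((1 : ↥(evenSA θ)) : A) = 1
      exact h1
    · show (0:ℂ) ≤ φ ((star b * b : ↥(evenSA θ)) : A)
      exact h2 (b : A)
  -- R is injective on even states
  have hinj : Set.InjOn R (evenStates θ) := by
    intro φ1 h1 φ2 h2 h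
    ext a
    rw [← heval φ1 h1 a, ← heval φ2 h2 a, ← hRapp, ← hRapp, h]
  -- R is surjective onto states of the even part
  have hsurj : Set.SurjOn R (evenStates θ) {ψ : ↥(evenSA θ) →L[ℂ] ℂ | IsState ψ} := by
    rintro ψ ⟨hψ1, hψ2⟩
    have hQfix : ∀ b : ↥(evenSA θ), Q (b : A) = b := by
      intro b
      apply Subtype.ext
      rw [hQcoe, b.2, half_smul_add_self]
    refine ⟨ψ.comp Q, ⟨⟨?_, ?_⟩, ?_⟩, ?_⟩
    · show ψ (Q 1) = 1
      rw [show (1:A) = ((1 : ↥(evenSA θ)) : A) from rfl, hQfix]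
      exact hψ1
    · -- positivity
      intro a
      show (0:ℂ) ≤ ψ (Q (star a * a))
      set v : A := (2⁻¹:ℂ) • (a - θ a) with hv
      have hvodd : θ v = -v := by
        rw [hv, map_smul, map_sub, hθ, ← smul_neg, neg_sub]
      have hxeven : θ (star v * v) = star v * v := by
        rw [map_mul, map_star, hvodd, star_neg, neg_mul_neg]
      obtain ⟨y, hy1, hy2⟩ := exists_even_sqrt θ (star v * v) hxeven ⟨v, rfl⟩
      have key : ((Q (star a * a) : ↥(evenSA θ)) : A)
          = star ((Q a : ↥(evenSA θ)) : A) * ((Q a : ↥(evenSA θ)) : A) + star v * v := by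
        rw [hQcoe, hQcoe]
        rw [map_mul, map_star]
        have hstar_half : star (2⁻¹:ℂ) = 2⁻¹ := by
          simp [Complex.ext_iff]
        have expand : star (a + θ a) * (a + θ a) + star (a - θ a) * (a - θ a)
            = (2:ℂ) • (star a * a + star (θ a) * θ a) := by
          simp only [star_add, star_sub, add_mul, mul_add, sub_mul, mul_sub, two_smul, smul_add]
          abel
        calc (2⁻¹:ℂ) • (star a * a + star (θ a) * θ a)
            = ((2⁻¹ * 2⁻¹ : ℂ) * 2) • (star a * a + star (θ a) * θ a) := by norm_num
          _ = (2⁻¹ * 2⁻¹ : ℂ) • ((2:ℂ) • (star a * a + star (θ a) * θ a)) := by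
              rw [smul_smul]
          _ = (2⁻¹ * 2⁻¹ : ℂ) • (star (a + θ a) * (a + θ a) + star (a - θ a) * (a - θ a)) := by
              rw [expand]
          _ = star ((2⁻¹:ℂ) • (a + θ a)) * ((2⁻¹:ℂ) • (a + θ a)) + star v * v := by
              rw [hv, star_smul, star_smul, hstar_half, smul_mul_smul_comm,
                smul_mul_smul_comm, smul_add]
      have keyB : Q (star a * a) = star (Q a) * (Q a) + star (⟨y, hy1⟩ : ↥(evenSA θ)) * ⟨y, hy1⟩ := by
        apply Subtype.ext
        rw [key, ← hy2]
        rfl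
      rw [keyB, map_add]
      exact add_nonneg (hψ2 (Q a)) (hψ2 _)
    · -- evenness
      intro a
      show ψ (Q (θ a)) = ψ (Q a)
      congr 1
      apply Subtype.ext
      rw [hQcoe, hQcoe, hθ, add_comm]
    · -- R (ψ ∘ Q) = ψ
      apply ContinuousLinearMap.ext
      intro b
      show ψ (Q (b : A)) = ψ b
      rw [hQfix]
  refine ⟨⟨hmaps, hinj, hsurj⟩, ?_, ?_⟩
  · intro φ ψ t _ _
    rfl
  · -- extreme points correspondence
    intro ω hω
    have hRlin : ∀ (s t : ℝ) (φ ψ : A →L[ℂ] ℂ), R (s • φ + t • ψ) = s • R φ + t • R ψ :=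
      fun _ _ _ _ => rfl
    have hconvS : ∀ φ1 ∈ evenStates θ, ∀ φ2 ∈ evenStates θ, ∀ s t : ℝ,
        0 < s → 0 < t → s + t = 1 → s • φ1 + t • φ2 ∈ evenStates θ := by
      rintro φ1 ⟨⟨h11, h12⟩, h1e⟩ φ2 ⟨⟨h21, h22⟩, h2e⟩ s t hs ht hst
      have happ : ∀ a : A, (s • φ1 + t • φ2) a = (s:ℂ) * φ1 a + (t:ℂ) * φ2 a := by
        intro a
        simp [Complex.real_smul]
      refine ⟨⟨?_, ?_⟩, ?_⟩
      · rw [happ, h11, h21, mul_one, mul_one, ← Complex.ofReal_add, hst, Complex.ofReal_one]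
      · intro a
        rw [happ]
        exact add_nonneg (mul_nonneg (Complex.zero_le_real.mpr hs.le) (h12 a))
          (mul_nonneg (Complex.zero_le_real.mpr ht.le) (h22 a))
      · intro a
        rw [happ, happ, h1e, h2e]
    constructor
    · intro hext
      rw [mem_extremePoints] at hext ⊢
      refine ⟨hmaps hω, ?_⟩
      rintro ψ1 hψ1 ψ2 hψ2 ⟨s, t, hs, ht, hst, hseg⟩
      obtain ⟨φ1, hφ1, rfl⟩ := hsurj hψ1
      obtain ⟨φ2, hφ2, rfl⟩ := hsurj hψ2
      have hmem := hconvS φ1 hφ1 φ2 hφ2 s t hs ht hst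
      have : R (s • φ1 + t • φ2) = R ω := by rw [hRlin]; exact hseg
      have heq : s • φ1 + t • φ2 = ω := hinj hmem hω this
      obtain ⟨e1, e2⟩ := hext.2 φ1 hφ1 φ2 hφ2 ⟨s, t, hs, ht, hst, heq⟩
      rw [e1, e2]
      exact ⟨rfl, rfl⟩
    · intro hext
      rw [mem_extremePoints] at hext ⊢
      refine ⟨hω, ?_⟩
      rintro φ1 hφ1 φ2 hφ2 ⟨s, t, hs, ht, hst, hseg⟩
      have : R (s • φ1 + t • φ2) = R ω := by rw [hseg]
      rw [hRlin] at this
      obtain ⟨e1, e2⟩ := hext.2 (R φ1) (hmaps hφ1) (R φ2) (hmaps hφ2) ⟨s, t, hs, ht, hst, this⟩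
      exact ⟨hinj hφ1 hω e1, hinj hφ2 hω e2⟩
end

section
/- Let (A₁, θ₁), (A₂, θ₂) be Z₂-graded unital C*-algebras and ω₁, ω₂ states on A₁, A₂ respectively, with neither ω₁ nor ω₂ even. Then the product functional ω₁ × ω₂ on the algebraic Z₂-graded (Fermi) tensor product A₁ ⊛ A₂ is not positive. -/
open scoped ComplexOrder TensorProduct

/-- The product functional ω₁ × ω₂ on the algebraic tensor product,
`(ω₁ × ω₂)(a ⊗ b) = ω₁(a)·ω₂(b)`. -/
noncomputable def prodState {A₁ A₂ : Type*} [NormedRing A₁] [NormedAlgebra ℂ A₁]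
    [NormedRing A₂] [NormedAlgebra ℂ A₂]
    (ω₁ : A₁ →L[ℂ] ℂ) (ω₂ : A₂ →L[ℂ] ℂ) : A₁ ⊗[ℂ] A₂ →ₗ[ℂ] ℂ :=
  TensorProduct.lift ((ω₁.toLinearMap).smulRight (ω₂.toLinearMap))

/- STATEMENT 8: if neither ω₁ nor ω₂ is even, the product functional ω₁ × ω₂
is not positive on the Fermi tensor product A₁ ⊛ A₂.  Here `mu` and `sta` are the
(uniquely determined) Fermi multiplication and involution of A₁ ⊛ A₂, characterized
by their values on homogeneous simple tensors. -/
lemma exists_odd_sa {A : Type*} [NormedRing A] [StarRing A] [NormedAlgebra ℂ A]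
    [StarModule ℂ A]
    (θ : A ≃⋆ₐ[ℂ] A) (hθ : ∀ a, θ (θ a) = a)
    (ω : A →L[ℂ] ℂ) (hne : ¬ ∀ a, ω (θ a) = ω a) :
    ∃ a : A, θ a = (-1 : ℂ) • a ∧ star a = a ∧ ω a ≠ 0 := by
  push_neg at hne
  obtain ⟨a, ha⟩ := hne
  set b := θ a - a with hb
  have hθb : θ b = -b := by
    simp only [hb, map_sub, hθ, neg_sub]
  have hωb : ω b ≠ 0 := by
    simp only [hb, map_sub]
    exact sub_ne_zero.mpr ha
  have hθsb : θ (star b) = -star b := by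
    rw [map_star, hθb, star_neg]
  set x := b + star b with hx
  set y := Complex.I • (star b - b) with hy
  have hθx : θ x = -x := by
    simp only [hx, map_add, hθb, hθsb, neg_add]
  have hθy : θ y = -y := by
    rw [hy, map_smul, map_sub, hθb, hθsb, ← smul_neg]
    congr 1
    abel
  have hsx : star x = x := by
    simp only [hx, star_add, star_star, add_comm]
  have hsy : star y = y := by
    simp only [hy, star_smul, star_sub, star_star, Complex.star_def, Complex.conj_I,
      neg_smul, ← smul_neg, neg_sub]
  have hxy : x + Complex.I • y = b + b := by
    simp only [hx, hy, smul_smul, Complex.I_mul_I, neg_one_smul, neg_sub]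
    abel
  have : ω x + Complex.I * ω y ≠ 0 := by
    have h0 : ω x + Complex.I * ω y = ω b + ω b := by
      have h1 : ω (x + Complex.I • y) = ω x + Complex.I * ω y := by
        rw [map_add, map_smul, smul_eq_mul]
      rw [← h1, hxy, map_add]
    rw [h0]
    intro h
    exact hωb (by linear_combination h / 2)
  rcases eq_or_ne (ω x) 0 with hx0 | hx0
  · refine ⟨y, by rw [hθy, neg_one_smul], hsy, ?_⟩
    intro h
    exact this (by rw [hx0, h, mul_zero, add_zero])
  · exact ⟨x, by rw [hθx, neg_one_smul], hsx, hx0⟩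

theorem stmt8 {A₁ A₂ : Type*}
    [NormedRing A₁] [StarRing A₁] [CStarRing A₁] [NormedAlgebra ℂ A₁]
    [CompleteSpace A₁] [StarModule ℂ A₁]
    [NormedRing A₂] [StarRing A₂] [CStarRing A₂] [NormedAlgebra ℂ A₂]
    [CompleteSpace A₂] [StarModule ℂ A₂]
    (θ₁ : A₁ ≃⋆ₐ[ℂ] A₁) (hθ₁ : ∀ a, θ₁ (θ₁ a) = a)
    (θ₂ : A₂ ≃⋆ₐ[ℂ] A₂) (hθ₂ : ∀ a, θ₂ (θ₂ a) = a)
    -- the Fermi (twisted) multiplication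
    (mu : A₁ ⊗[ℂ] A₂ →ₗ[ℂ] A₁ ⊗[ℂ] A₂ →ₗ[ℂ] A₁ ⊗[ℂ] A₂)
    (hmu : ∀ (a₁ b₁ : A₁) (a₂ b₂ : A₂) (s t : ℂ),
      (s = 1 ∨ s = -1) → (t = 1 ∨ t = -1) → θ₂ a₂ = s • a₂ → θ₁ b₁ = t • b₁ →
      mu (a₁ ⊗ₜ[ℂ] a₂) (b₁ ⊗ₜ[ℂ] b₂) =
        (if s = -1 ∧ t = -1 then (-1 : ℂ) else 1) • ((a₁ * b₁) ⊗ₜ[ℂ] (a₂ * b₂)))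
    -- the Fermi (twisted) involution
    (sta : A₁ ⊗[ℂ] A₂ →ₛₗ[starRingEnd ℂ] A₁ ⊗[ℂ] A₂)
    (hsta : ∀ (a₁ : A₁) (a₂ : A₂) (s t : ℂ),
      (s = 1 ∨ s = -1) → (t = 1 ∨ t = -1) → θ₁ a₁ = s • a₁ → θ₂ a₂ = t • a₂ →
      sta (a₁ ⊗ₜ[ℂ] a₂) =
        (if s = -1 ∧ t = -1 then (-1 : ℂ) else 1) • ((star a₁) ⊗ₜ[ℂ] (star a₂)))
    (ω₁ : A₁ →L[ℂ] ℂ) (hω₁ : IsState ω₁) (hne₁ : ¬ ∀ a : A₁, ω₁ (θ₁ a) = ω₁ a)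
    (ω₂ : A₂ →L[ℂ] ℂ) (hω₂ : IsState ω₂) (hne₂ : ¬ ∀ a : A₂, ω₂ (θ₂ a) = ω₂ a) :
    ¬ ∀ x : A₁ ⊗[ℂ] A₂, 0 ≤ prodState ω₁ ω₂ (mu (sta x) x) := by
  intro hpos
  obtain ⟨a₁, hθa₁, hsa₁, hwa₁⟩ := exists_odd_sa θ₁ hθ₁ ω₁ hne₁
  obtain ⟨a₂, hθa₂, hsa₂, hwa₂⟩ := exists_odd_sa θ₂ hθ₂ ω₂ hne₂
  have h1one : θ₁ (1 : A₁) = (1 : ℂ) • (1 : A₁) := by rw [map_one, one_smul]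
  have h2one : θ₂ (1 : A₂) = (1 : ℂ) • (1 : A₂) := by rw [map_one, one_smul]
  have hps : ∀ (x : A₁) (y : A₂), prodState ω₁ ω₂ (x ⊗ₜ[ℂ] y) = ω₁ x * ω₂ y := by
    intro x y
    simp [prodState, TensorProduct.lift.tmul, smul_eq_mul]
  have hstae : sta ((1:A₁) ⊗ₜ[ℂ] (1:A₂)) = (1:A₁) ⊗ₜ[ℂ] (1:A₂) := by
    have := hsta 1 1 1 1 (Or.inl rfl) (Or.inl rfl) h1one h2one
    norm_num at this
    simpa using this
  have hstau : sta (a₁ ⊗ₜ[ℂ] a₂) = -(a₁ ⊗ₜ[ℂ] a₂) := by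
    have := hsta a₁ a₂ (-1) (-1) (Or.inr rfl) (Or.inr rfl) hθa₁ hθa₂
    norm_num [hsa₁, hsa₂] at this
    simpa [neg_one_smul] using this
  have hstav : sta (a₁ ⊗ₜ[ℂ] (1:A₂)) = a₁ ⊗ₜ[ℂ] (1:A₂) := by
    have := hsta a₁ 1 (-1) 1 (Or.inr rfl) (Or.inl rfl) hθa₁ h2one
    norm_num [hsa₁] at this
    simpa using this
  have hstaw : sta ((1:A₁) ⊗ₜ[ℂ] a₂) = (1:A₁) ⊗ₜ[ℂ] a₂ := by
    have := hsta 1 a₂ 1 (-1) (Or.inl rfl) (Or.inr rfl) h1one hθa₂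
    norm_num [hsa₂] at this
    simpa using this
  have muee : mu ((1:A₁) ⊗ₜ[ℂ] (1:A₂)) ((1:A₁) ⊗ₜ[ℂ] (1:A₂)) = (1:A₁) ⊗ₜ[ℂ] (1:A₂) := by
    have := hmu 1 1 1 1 1 1 (Or.inl rfl) (Or.inl rfl) h2one h1one
    norm_num at this
    simpa using this
  have muev : mu ((1:A₁) ⊗ₜ[ℂ] (1:A₂)) (a₁ ⊗ₜ[ℂ] (1:A₂)) = a₁ ⊗ₜ[ℂ] (1:A₂) := by
    have := hmu 1 a₁ 1 1 1 (-1) (Or.inl rfl) (Or.inr rfl) h2one hθa₁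
    norm_num at this
    simpa using this
  have muve : mu (a₁ ⊗ₜ[ℂ] (1:A₂)) ((1:A₁) ⊗ₜ[ℂ] (1:A₂)) = a₁ ⊗ₜ[ℂ] (1:A₂) := by
    have := hmu a₁ 1 1 1 1 1 (Or.inl rfl) (Or.inl rfl) h2one h1one
    norm_num at this
    simpa using this
  have muvv : mu (a₁ ⊗ₜ[ℂ] (1:A₂)) (a₁ ⊗ₜ[ℂ] (1:A₂)) = (a₁ * a₁) ⊗ₜ[ℂ] (1:A₂) := by
    have := hmu a₁ a₁ 1 1 1 (-1) (Or.inl rfl) (Or.inr rfl) h2one hθa₁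
    norm_num at this
    simpa using this
  have muew : mu ((1:A₁) ⊗ₜ[ℂ] (1:A₂)) ((1:A₁) ⊗ₜ[ℂ] a₂) = (1:A₁) ⊗ₜ[ℂ] a₂ := by
    have := hmu 1 1 1 a₂ 1 1 (Or.inl rfl) (Or.inl rfl) h2one h1one
    norm_num at this
    simpa using this
  have muwe : mu ((1:A₁) ⊗ₜ[ℂ] a₂) ((1:A₁) ⊗ₜ[ℂ] (1:A₂)) = (1:A₁) ⊗ₜ[ℂ] a₂ := by
    have := hmu 1 1 a₂ 1 (-1) 1 (Or.inr rfl) (Or.inl rfl) hθa₂ h1one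
    norm_num at this
    simpa using this
  have muww : mu ((1:A₁) ⊗ₜ[ℂ] a₂) ((1:A₁) ⊗ₜ[ℂ] a₂) = (1:A₁) ⊗ₜ[ℂ] (a₂ * a₂) := by
    have := hmu 1 1 a₂ a₂ (-1) 1 (Or.inr rfl) (Or.inl rfl) hθa₂ h1one
    norm_num at this
    simpa using this
  have mueu : mu ((1:A₁) ⊗ₜ[ℂ] (1:A₂)) (a₁ ⊗ₜ[ℂ] a₂) = a₁ ⊗ₜ[ℂ] a₂ := by
    have := hmu 1 a₁ 1 a₂ 1 (-1) (Or.inl rfl) (Or.inr rfl) h2one hθa₁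
    norm_num at this
    simpa using this
  have muue : mu (a₁ ⊗ₜ[ℂ] a₂) ((1:A₁) ⊗ₜ[ℂ] (1:A₂)) = a₁ ⊗ₜ[ℂ] a₂ := by
    have := hmu a₁ 1 a₂ 1 (-1) 1 (Or.inr rfl) (Or.inl rfl) hθa₂ h1one
    norm_num at this
    simpa using this
  have muuu : mu (a₁ ⊗ₜ[ℂ] a₂) (a₁ ⊗ₜ[ℂ] a₂) = -((a₁ * a₁) ⊗ₜ[ℂ] (a₂ * a₂)) := by
    have := hmu a₁ a₁ a₂ a₂ (-1) (-1) (Or.inr rfl) (Or.inr rfl) hθa₂ hθa₁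
    norm_num at this
    simpa [neg_one_smul] using this
  have hp₁ : 0 ≤ ω₁ (a₁ * a₁) := by have := hω₁.2 a₁; rwa [hsa₁] at this
  have hp₂ : 0 ≤ ω₂ (a₂ * a₂) := by have := hω₂.2 a₂; rwa [hsa₂] at this
  have hp₁im : (ω₁ (a₁ * a₁)).im = 0 := ((Complex.nonneg_iff.mp hp₁).2).symm
  have hp₂im : (ω₂ (a₂ * a₂)).im = 0 := ((Complex.nonneg_iff.mp hp₂).2).symm
  have hω₁1 : ω₁ (1:A₁) = 1 := hω₁.1
  have hω₂1 : ω₂ (1:A₂) = 1 := hω₂.1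
  have him₁ : (ω₁ a₁).im = 0 := by
    have hstx : sta ((1:A₁) ⊗ₜ[ℂ] (1:A₂) + a₁ ⊗ₜ[ℂ] (1:A₂)) =
        (1:A₁) ⊗ₜ[ℂ] (1:A₂) + a₁ ⊗ₜ[ℂ] (1:A₂) := by
      rw [map_add, hstae, hstav]
    have hmux : mu ((1:A₁) ⊗ₜ[ℂ] (1:A₂) + a₁ ⊗ₜ[ℂ] (1:A₂))
          ((1:A₁) ⊗ₜ[ℂ] (1:A₂) + a₁ ⊗ₜ[ℂ] (1:A₂)) =
        (1:A₁) ⊗ₜ[ℂ] (1:A₂) + a₁ ⊗ₜ[ℂ] (1:A₂) + a₁ ⊗ₜ[ℂ] (1:A₂)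
          + (a₁ * a₁) ⊗ₜ[ℂ] (1:A₂) := by
      simp only [map_add, LinearMap.add_apply, muee, muev, muve, muvv]
      abel
    have h := hpos ((1:A₁) ⊗ₜ[ℂ] (1:A₂) + a₁ ⊗ₜ[ℂ] (1:A₂))
    rw [hstx, hmux] at h
    simp only [map_add, hps, hω₁1, hω₂1, one_mul, mul_one] at h
    have h2 := ((Complex.nonneg_iff.mp h).2).symm
    simp only [Complex.add_im, Complex.one_im, hp₁im] at h2
    linarith
  have him₂ : (ω₂ a₂).im = 0 := by
    have hstx : sta ((1:A₁) ⊗ₜ[ℂ] (1:A₂) + (1:A₁) ⊗ₜ[ℂ] a₂) =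
        (1:A₁) ⊗ₜ[ℂ] (1:A₂) + (1:A₁) ⊗ₜ[ℂ] a₂ := by
      rw [map_add, hstae, hstaw]
    have hmux : mu ((1:A₁) ⊗ₜ[ℂ] (1:A₂) + (1:A₁) ⊗ₜ[ℂ] a₂)
          ((1:A₁) ⊗ₜ[ℂ] (1:A₂) + (1:A₁) ⊗ₜ[ℂ] a₂) =
        (1:A₁) ⊗ₜ[ℂ] (1:A₂) + (1:A₁) ⊗ₜ[ℂ] a₂ + (1:A₁) ⊗ₜ[ℂ] a₂
          + (1:A₁) ⊗ₜ[ℂ] (a₂ * a₂) := by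
      simp only [map_add, LinearMap.add_apply, muee, muew, muwe, muww]
      abel
    have h := hpos ((1:A₁) ⊗ₜ[ℂ] (1:A₂) + (1:A₁) ⊗ₜ[ℂ] a₂)
    rw [hstx, hmux] at h
    simp only [map_add, hps, hω₁1, hω₂1, one_mul, mul_one] at h
    have h2 := ((Complex.nonneg_iff.mp h).2).symm
    simp only [Complex.add_im, Complex.one_im, hp₂im] at h2
    linarith
  have hstx : sta ((1:A₁) ⊗ₜ[ℂ] (1:A₂) + Complex.I • (a₁ ⊗ₜ[ℂ] a₂)) =
      (1:A₁) ⊗ₜ[ℂ] (1:A₂) + Complex.I • (a₁ ⊗ₜ[ℂ] a₂) := by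
    rw [map_add, LinearMap.map_smulₛₗ, hstae, hstau, Complex.conj_I, smul_neg,
      neg_smul, neg_neg]
  have hmux : mu ((1:A₁) ⊗ₜ[ℂ] (1:A₂) + Complex.I • (a₁ ⊗ₜ[ℂ] a₂))
        ((1:A₁) ⊗ₜ[ℂ] (1:A₂) + Complex.I • (a₁ ⊗ₜ[ℂ] a₂)) =
      (1:A₁) ⊗ₜ[ℂ] (1:A₂) + Complex.I • (a₁ ⊗ₜ[ℂ] a₂) + Complex.I • (a₁ ⊗ₜ[ℂ] a₂)
        + (a₁ * a₁) ⊗ₜ[ℂ] (a₂ * a₂) := by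
    simp only [map_add, map_smul, LinearMap.add_apply, LinearMap.smul_apply,
      muee, mueu, muue, muuu]
    match_scalars <;> (try ring) <;> simp [pow_two, Complex.I_mul_I]
  have h := hpos ((1:A₁) ⊗ₜ[ℂ] (1:A₂) + Complex.I • (a₁ ⊗ₜ[ℂ] a₂))
  rw [hstx, hmux] at h
  simp only [map_add, map_smul, hps, hω₁1, hω₂1, one_mul, mul_one, smul_eq_mul] at h
  have him := ((Complex.nonneg_iff.mp h).2).symm
  simp only [Complex.add_im, Complex.one_im, Complex.mul_im, Complex.mul_re,
    Complex.I_re, Complex.I_im, him₁, him₂, hp₁im, hp₂im, zero_mul, mul_zero,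
    one_mul, zero_add, add_zero, sub_zero, zero_sub, neg_zero] at him
  have hre₁ : (ω₁ a₁).re ≠ 0 := by
    intro h0
    exact hwa₁ (Complex.ext h0 him₁)
  have hre₂ : (ω₂ a₂).re ≠ 0 := by
    intro h0
    exact hwa₂ (Complex.ext h0 him₂)
  have hmz : (ω₁ a₁).re * (ω₂ a₂).re ≠ 0 := mul_ne_zero hre₁ hre₂
  apply hmz
  linarith [him]
end
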